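/- Let K ⊆ ℝ^d be a convex body with the origin in its interior and K ⊆ d²B, and let δ > 0 satisfy δd⁴ < 1. Then (Φ_δ(K))° ⊆ (1 − δd⁴)^{-1}·K°, and consequently vol_d(Φ_δ(K)) · vol_d((Φ_δ(K))°) ≤ (1 − δd⁴)^{-d} · vol_d(K) · vol_d(K°). -/
import Mathlib


open scoped Pointwise RealInnerProductSpace
open MeasureTheory

/-- For `δ > 0`, `φ_δ(r) = 2 / (1 + √(1 + 4δr²))`, the unique positive root of
`φ + δr²φ² = 1`. -/
noncomputable def phi (δ r : ℝ) : ℝ := 2 / (1 + Real.sqrt (1 + 4 * δ * r ^ 2))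

/-- The map `Φ_δ : ℝ^d → ℝ^d`, `Φ_δ(x) = φ_δ(|x|) • x`. -/
noncomputable def Phi (δ : ℝ) {d : ℕ} (x : EuclideanSpace ℝ (Fin d)) :
    EuclideanSpace ℝ (Fin d) := phi δ ‖x‖ • x

/-- The (one-sided) polar body `K° = {y : ⟨x, y⟩ ≤ 1 for all x ∈ K}`. -/
def polarBody {d : ℕ} (K : Set (EuclideanSpace ℝ (Fin d))) :
    Set (EuclideanSpace ℝ (Fin d)) := {y | ∀ x ∈ K, ⟪x, y⟫ ≤ 1}

lemma phi_pos {δ : ℝ} (hδ : 0 < δ) (r : ℝ) : 0 < phi δ r := by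
  unfold phi
  have h : 0 ≤ Real.sqrt (1 + 4 * δ * r ^ 2) := Real.sqrt_nonneg _
  positivity

lemma phi_le_one {δ : ℝ} (hδ : 0 < δ) (r : ℝ) : phi δ r ≤ 1 := by
  unfold phi
  have h1 : (1 : ℝ) ≤ Real.sqrt (1 + 4 * δ * r ^ 2) := by
    have := Real.sqrt_le_sqrt (show (1:ℝ) ≤ 1 + 4 * δ * r ^ 2 by nlinarith [sq_nonneg r])
    rwa [Real.sqrt_one] at this
  rw [div_le_one (by linarith)]
  linarith

lemma phi_ge {δ r : ℝ} (hδ : 0 < δ) (ht : δ * r ^ 2 < 1) :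
    1 - δ * r ^ 2 ≤ phi δ r := by
  unfold phi
  rw [show 1 + 4 * δ * r ^ 2 = 1 + 4 * (δ * r ^ 2) by ring]
  set t := δ * r ^ 2 with htd
  have ht0 : 0 ≤ t := by positivity
  have hs0 : 0 ≤ Real.sqrt (1 + 4 * t) := Real.sqrt_nonneg _
  have hs2 : Real.sqrt (1 + 4 * t) ^ 2 = 1 + 4 * t := Real.sq_sqrt (by linarith)
  set s := Real.sqrt (1 + 4 * t) with hsd
  rw [le_div_iff₀ (by linarith)]
  nlinarith [sq_nonneg (1 + t - (1 - t) * s), sq_nonneg t, mul_nonneg ht0 hs0]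

/-- Let `K ⊆ ℝ^d` be a convex body with the origin in its interior, `K ⊆ d²B`, and let
`δ > 0` satisfy `δd⁴ < 1`. Then `(Φ_δ(K))° ⊆ (1 - δd⁴)⁻¹·K°` and consequently
`vol(Φ_δ(K))·vol((Φ_δ(K))°) ≤ (1 - δd⁴)^{-d}·vol(K)·vol(K°)`. -/
theorem stmt9 (d : ℕ) (δ : ℝ) (K : Set (EuclideanSpace ℝ (Fin d)))
    (hKcomp : IsCompact K) (hKconv : Convex ℝ K)
    (h0 : (0 : EuclideanSpace ℝ (Fin d)) ∈ interior K)
    (hKB : K ⊆ Metric.closedBall 0 ((d : ℝ) ^ 2))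
    (hδ : 0 < δ) (hδ2 : δ * (d : ℝ) ^ 4 < 1) :
    polarBody (Phi δ '' K) ⊆ (1 - δ * (d : ℝ) ^ 4)⁻¹ • polarBody K ∧
    volume (Phi δ '' K) * volume (polarBody (Phi δ '' K)) ≤
      ENNReal.ofReal ((1 - δ * (d : ℝ) ^ 4)⁻¹ ^ d) *
        (volume K * volume (polarBody K)) := by
  have hc : 0 < 1 - δ * (d : ℝ) ^ 4 := by linarith
  have h0K : (0 : EuclideanSpace ℝ (Fin d)) ∈ K := interior_subset h0
  have hsub1 : polarBody (Phi δ '' K) ⊆ (1 - δ * (d : ℝ) ^ 4)⁻¹ • polarBody K := by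
    intro y hy
    rw [Set.mem_smul_set_iff_inv_smul_mem₀ (by positivity) , inv_inv]
    intro x hx
    have hnx : ‖x‖ ≤ (d : ℝ) ^ 2 := by
      have := hKB hx
      simpa [Metric.mem_closedBall, dist_zero_right] using this
    have hr2 : δ * ‖x‖ ^ 2 ≤ δ * (d : ℝ) ^ 4 := by
      have h2 : ‖x‖ ^ 2 ≤ ((d : ℝ) ^ 2) ^ 2 := by
        have := norm_nonneg x
        nlinarith
      nlinarith
    have hφc : 1 - δ * (d : ℝ) ^ 4 ≤ phi δ ‖x‖ := by
      have := phi_ge hδ (lt_of_le_of_lt hr2 hδ2)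
      linarith
    have h1 : phi δ ‖x‖ * ⟪x, y⟫ ≤ 1 := by
      have h := hy (Phi δ x) (Set.mem_image_of_mem _ hx)
      unfold Phi at h
      rwa [real_inner_smul_left] at h
    show ⟪x, (1 - δ * (d : ℝ) ^ 4) • y⟫ ≤ 1
    rw [real_inner_smul_right]
    rcases le_or_gt 0 (⟪x, y⟫ : ℝ) with h | h
    · nlinarith
    · nlinarith
  refine ⟨hsub1, ?_⟩
  have hPhiK : Phi δ '' K ⊆ K := by
    rintro _ ⟨x, hx, rfl⟩
    have hφ0 : 0 ≤ phi δ ‖x‖ := (phi_pos hδ _).le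
    have hφ1 : phi δ ‖x‖ ≤ 1 := phi_le_one hδ _
    have := hKconv h0K hx (by linarith : (0:ℝ) ≤ 1 - phi δ ‖x‖) hφ0 (by ring)
    simpa [Phi, smul_zero] using this
  have hv1 : volume (Phi δ '' K) ≤ volume K := measure_mono hPhiK
  have hv2 : volume (polarBody (Phi δ '' K)) ≤
      volume ((1 - δ * (d : ℝ) ^ 4)⁻¹ • polarBody K) := measure_mono hsub1
  rw [Measure.addHaar_smul] at hv2
  rw [finrank_euclideanSpace_fin, abs_of_pos (by positivity)] at hv2
  calc volume (Phi δ '' K) * volume (polarBody (Phi δ '' K))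
      ≤ volume K * (ENNReal.ofReal ((1 - δ * (d : ℝ) ^ 4)⁻¹ ^ d) * volume (polarBody K)) :=
        mul_le_mul' hv1 hv2
    _ = ENNReal.ofReal ((1 - δ * (d : ℝ) ^ 4)⁻¹ ^ d) * (volume K * volume (polarBody K)) := by
        ring
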